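/- (Azumaya) If a ∈ R satisfies aⁿ = aⁿ⁺¹x and aᵐ = yaᵐ⁺¹ for some x, y ∈ R and positive integers n, m, then aᵐ = aᵐ⁺¹x and aⁿ = yaⁿ⁺¹. -/
import Mathlib

lemma aux_r {R : Type*} [Ring R] (a x : R) (n : ℕ) (hr : a ^ n = a ^ (n + 1) * x) :
    ∀ k, a ^ n = a ^ (n + k) * x ^ k := by
  intro k
  induction k with
  | zero => simp
  | succ k ih =>
    have h1 : a ^ (n + k) = a ^ (n + k + 1) * x := by
      calc a ^ (n + k) = a ^ k * a ^ n := by rw [← pow_add]; ring_nf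
        _ = a ^ k * (a ^ (n + 1) * x) := by rw [hr]
        _ = a ^ (n + k + 1) * x := by rw [← mul_assoc, ← pow_add]; ring_nf
    calc a ^ n = a ^ (n + k) * x ^ k := ih
      _ = a ^ (n + k + 1) * x * x ^ k := by rw [h1]
      _ = a ^ (n + (k + 1)) * x ^ (k + 1) := by
          rw [mul_assoc, ← pow_succ', Nat.add_assoc]

lemma aux_l {R : Type*} [Ring R] (a y : R) (m : ℕ) (hl : a ^ m = y * a ^ (m + 1)) :
    ∀ k, a ^ m = y ^ k * a ^ (m + k) := by
  intro k
  induction k with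
  | zero => simp
  | succ k ih =>
    have h1 : a ^ (m + k) = y * a ^ (m + k + 1) := by
      calc a ^ (m + k) = a ^ m * a ^ k := by rw [← pow_add]
        _ = y * a ^ (m + 1) * a ^ k := by rw [hl]
        _ = y * a ^ (m + k + 1) := by rw [mul_assoc, ← pow_add]; ring_nf
    calc a ^ m = y ^ k * a ^ (m + k) := ih
      _ = y ^ k * (y * a ^ (m + k + 1)) := by rw [h1]
      _ = y ^ (k + 1) * a ^ (m + (k + 1)) := by
          rw [← mul_assoc, ← pow_succ, Nat.add_assoc]

/-- Azumaya's lemma: if `a^n = a^(n+1) * x` and `a^m = y * a^(m+1)`,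
then `a^m = a^(m+1) * x` and `a^n = y * a^(n+1)`. -/
theorem stmt_7 {R : Type*} [Ring R] (a x y : R) (n m : ℕ) (hn : 0 < n) (hm : 0 < m)
    (hr : a ^ n = a ^ (n + 1) * x) (hl : a ^ m = y * a ^ (m + 1)) :
    a ^ m = a ^ (m + 1) * x ∧ a ^ n = y * a ^ (n + 1) := by
  have h2 := aux_l a y m hl n
  have hmn : a ^ (m + n) = a ^ (m + n) * a * x := by
    calc a ^ (m + n) = a ^ m * a ^ n := by rw [← pow_add]
      _ = a ^ m * (a ^ (n + 1) * x) := by rw [hr]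
      _ = a ^ (m + n) * a * x := by rw [← mul_assoc, ← pow_add, ← Nat.add_assoc, pow_succ]
  have g1 : a ^ m = a ^ (m + 1) * x := by
    calc a ^ m = y ^ n * a ^ (m + n) := h2
      _ = y ^ n * (a ^ (m + n) * a * x) := by rw [← hmn]
      _ = (y ^ n * a ^ (m + n)) * a * x := by rw [← mul_assoc, ← mul_assoc]
      _ = a ^ m * a * x := by rw [← h2]
      _ = a ^ (m + 1) * x := by rw [pow_succ]
  have h1 := aux_r a x n hr m
  have hnm : a ^ (n + m) = y * a * a ^ (n + m) := by
    calc a ^ (n + m) = a ^ m * a ^ n := by rw [← pow_add]; ring_nf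
      _ = y * a ^ (m + 1) * a ^ n := by rw [hl]
      _ = y * a * a ^ (n + m) := by rw [mul_assoc, ← pow_add, show m + 1 + n = n + m + 1 by omega, pow_succ', mul_assoc]
  have g2 : a ^ n = y * a ^ (n + 1) := by
    calc a ^ n = a ^ (n + m) * x ^ m := h1
      _ = y * a * (a ^ (n + m) * x ^ m) := by rw [← mul_assoc, ← hnm]
      _ = y * a * a ^ n := by rw [← h1]
      _ = y * a ^ (n + 1) := by rw [pow_succ', ← mul_assoc]
  exact ⟨g1, g2⟩
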